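/- (Theorem 1.) Let p₁ = (t₁,x₁), …, p_k = (t_k,x_k) be k pairwise spacelike separated events in ℝ × ℝⁿ (so in particular x_i ≠ x_j for i ≠ j, and each H_{ij} is an affine hyperplane). Then the number O(p₁,…,p_k) of achievable orders equals the number of connected components of ℝⁿ ∖ ⋃_{i<j} H_{ij} that contain a point v with ‖v‖ < 1. More precisely, the induced ordering of the values t_i - ⟪x_i,v⟫ is constant as v ranges over any fixed connected component, and this assignment gives a bijection between the connected components containing a point of the open unit ball and the achievable orders. -/

import Mathlib

open scoped InnerProductSpace

noncomputable section

/-- The time at which the event `(t i, x i)` is observed (up to the positive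
factor `γ`) in the frame moving with velocity `v`. -/
def obsTime {n k : ℕ} (t : Fin k → ℝ) (x : Fin k → EuclideanSpace ℝ (Fin n))
    (v : EuclideanSpace ℝ (Fin n)) (i : Fin k) : ℝ :=
  t i - ⟪x i, v⟫_ℝ

/-- A permutation `π` is an achievable order of the events `(t i, x i)` if some
observer with velocity `‖v‖ < 1` sees the events in the order
`π 0, π 1, …, π (k-1)`. -/
def Achievable {n k : ℕ} (t : Fin k → ℝ) (x : Fin k → EuclideanSpace ℝ (Fin n))
    (π : Equiv.Perm (Fin k)) : Prop :=
  ∃ v : EuclideanSpace ℝ (Fin n), ‖v‖ < 1 ∧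
    StrictMono fun m : Fin k => obsTime t x v (π m)

/-- The complement `ℝⁿ ∖ ⋃_{i<j} H_{ij}` of the union of the hyperplanes
`H_{ij} = {v : t i - t j = ⟪x i - x j, v⟫}`. -/
def goodRegion {n k : ℕ} (t : Fin k → ℝ) (x : Fin k → EuclideanSpace ℝ (Fin n)) :
    Set (EuclideanSpace ℝ (Fin n)) :=
  {v | ∀ i j : Fin k, i ≠ j → t i - t j ≠ ⟪x i - x j, v⟫_ℝ}

/-- The connected components of `ℝⁿ ∖ ⋃_{i<j} H_{ij}` that contain a point `v`
with `‖v‖ < 1`. -/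
def ballComponents {n k : ℕ} (t : Fin k → ℝ) (x : Fin k → EuclideanSpace ℝ (Fin n)) :
    Set (Set (EuclideanSpace ℝ (Fin n))) :=
  {C | ∃ v, ‖v‖ < 1 ∧ v ∈ goodRegion t x ∧
    C = connectedComponentIn (goodRegion t x) v}

section Aux

variable {n k : ℕ} {t : Fin k → ℝ} {x : Fin k → EuclideanSpace ℝ (Fin n)}

lemma combo_neg {a b X Y : ℝ} (ha : 0 ≤ a) (hb : 0 ≤ b) (hab : a + b = 1)
    (hX : X < 0) (hY : Y < 0) : a * X + b * Y < 0 := by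
  calc a * X + b * Y ≤ a * max X Y + b * max X Y := by
        gcongr <;> simp [le_max_left, le_max_right]
    _ = max X Y := by rw [← add_mul, hab, one_mul]
    _ < 0 := max_lt hX hY

lemma obs_sub (v : EuclideanSpace ℝ (Fin n)) (i j : Fin k) :
    obsTime t x v i - obsTime t x v j = (t i - t j) - ⟪x i - x j, v⟫_ℝ := by
  simp [obsTime, inner_sub_left]; ring

lemma good_ne {v : EuclideanSpace ℝ (Fin n)} (hv : v ∈ goodRegion t x)
    {i j : Fin k} (h : i ≠ j) : obsTime t x v i ≠ obsTime t x v j := by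
  intro hij
  exact hv i j h (by have := obs_sub (t := t) (x := x) v i j; rw [hij] at this; linarith)

lemma obs_cont (i : Fin k) : Continuous (fun v : EuclideanSpace ℝ (Fin n) => obsTime t x v i) := by
  unfold obsTime
  exact continuous_const.sub (Continuous.inner continuous_const continuous_id)

/-- Part 1: the order is constant on connected components of the good region. -/
lemma order_const :
    ∀ v ∈ goodRegion t x, ∀ w ∈ connectedComponentIn (goodRegion t x) v,
        ∀ i j : Fin k, (obsTime t x v i < obsTime t x v j ↔
          obsTime t x w i < obsTime t x w j) := by
  have key : ∀ v ∈ goodRegion t x, ∀ w ∈ connectedComponentIn (goodRegion t x) v,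
      ∀ i j : Fin k, obsTime t x v i < obsTime t x v j → obsTime t x w i < obsTime t x w j := by
    intro v hv w hw i j hlt
    have hij : i ≠ j := by rintro rfl; exact lt_irrefl _ hlt
    have hwg : w ∈ goodRegion t x := connectedComponentIn_subset _ _ hw
    rcases (good_ne hwg hij).lt_or_gt with h | h
    · exact h
    · -- obsTime w j < obsTime w i : derive a contradiction
      exfalso
      set f : EuclideanSpace ℝ (Fin n) → ℝ := fun u => obsTime t x u j - obsTime t x u i with hf
      have hfc : Continuous f := (obs_cont j).sub (obs_cont i)
      have hpre : IsPreconnected (f '' connectedComponentIn (goodRegion t x) v) :=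
        isPreconnected_connectedComponentIn.image f hfc.continuousOn
      have hoc := hpre.ordConnected
      have h1 : f v ∈ f '' connectedComponentIn (goodRegion t x) v :=
        Set.mem_image_of_mem f (mem_connectedComponentIn hv)
      have h2 : f w ∈ f '' connectedComponentIn (goodRegion t x) v :=
        Set.mem_image_of_mem f hw
      have h0 : (0 : ℝ) ∈ Set.Icc (f w) (f v) := by
        constructor <;> simp only [hf] <;> linarith
      obtain ⟨u, hu, hu0⟩ := hoc.out h2 h1 h0
      have hug : u ∈ goodRegion t x := connectedComponentIn_subset _ _ hu
      exact good_ne hug hij (by simp only [hf] at hu0; linarith)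
  intro v hv w hw i j
  refine ⟨key v hv w hw i j, fun h => ?_⟩
  have hwg : w ∈ goodRegion t x := connectedComponentIn_subset _ _ hw
  have hvw : v ∈ connectedComponentIn (goodRegion t x) w := by
    rw [← connectedComponentIn_eq hw]; exact mem_connectedComponentIn hv
  exact key w hwg v hvw i j h

/-- If two good points induce the same order, they lie in the same component. -/
lemma same_order_mem {v w : EuclideanSpace ℝ (Fin n)} (hv : v ∈ goodRegion t x)
    (hw : w ∈ goodRegion t x)
    (h : ∀ i j : Fin k, obsTime t x v i < obsTime t x v j ↔ obsTime t x w i < obsTime t x w j) :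
    w ∈ connectedComponentIn (goodRegion t x) v := by
  have hseg : segment ℝ v w ⊆ goodRegion t x := by
    rintro u ⟨a, b, ha, hb, hab, rfl⟩
    intro i j hij
    intro heq
    have hinner : ⟪x i - x j, a • v + b • w⟫_ℝ
        = a * ⟪x i - x j, v⟫_ℝ + b * ⟪x i - x j, w⟫_ℝ := by
      rw [inner_add_right, inner_smul_right, inner_smul_right]
    have dv := obs_sub (t := t) (x := x) v i j
    have dw := obs_sub (t := t) (x := x) w i j
    -- obsTime differences at v and w have the same (nonzero) sign
    have h' := heq
    rw [hinner] at h'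
    have hzero : a * (t i - t j - ⟪x i - x j, v⟫_ℝ)
        + b * (t i - t j - ⟪x i - x j, w⟫_ℝ) = 0 := by
      linear_combination (t i - t j) * hab + h'
    rcases (good_ne hv hij).lt_or_gt with h1 | h1
    · have h2 : obsTime t x w i < obsTime t x w j := (h i j).1 h1
      have hv' : t i - t j - ⟪x i - x j, v⟫_ℝ < 0 := by linarith
      have hw' : t i - t j - ⟪x i - x j, w⟫_ℝ < 0 := by linarith
      exact absurd hzero (combo_neg ha hb hab hv' hw').ne
    · have h2 : obsTime t x w j < obsTime t x w i := by
        rcases (good_ne hw hij).lt_or_gt with h3 | h3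
        · exact absurd ((h i j).2 h3) (not_lt.2 h1.le)
        · exact h3
      have hv' : -(t i - t j - ⟪x i - x j, v⟫_ℝ) < 0 := by linarith
      have hw' : -(t i - t j - ⟪x i - x j, w⟫_ℝ) < 0 := by linarith
      have := combo_neg ha hb hab hv' hw'
      apply this.ne
      linear_combination -hzero
  exact (convex_segment v w).isPreconnected.subset_connectedComponentIn
    (left_mem_segment ℝ v w) hseg (right_mem_segment ℝ v w)

lemma sort_exists {f : Fin k → ℝ} (hf : Function.Injective f) :
    ∃ π : Equiv.Perm (Fin k), StrictMono (f ∘ π) :=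
  ⟨Tuple.sort f, (Tuple.monotone_sort f).strictMono_of_injective
    (hf.comp (Tuple.sort f).injective)⟩

lemma sort_unique {f : Fin k → ℝ} (hf : Function.Injective f) {π σ : Equiv.Perm (Fin k)}
    (hπ : StrictMono (f ∘ π)) (hσ : StrictMono (f ∘ σ)) : π = σ := by
  have hr : Set.range (f ∘ π) = Set.range (f ∘ σ) := by
    rw [Set.range_comp, Set.range_comp, Equiv.range_eq_univ, Equiv.range_eq_univ]
  have inst : WellFoundedLT (Fin k) := inferInstance
  have := (hπ.range_inj hσ).1 hr
  exact Equiv.ext fun m => hf (congrFun this m)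

end Aux

/-- **Theorem 1.** For `k` pairwise spacelike separated events, the induced
ordering of the observed times is constant on each connected component of the
complement of the hyperplane arrangement; the number of achievable orders
equals the number of connected components meeting the open unit ball, the
bijection being given by this assignment. -/
theorem number_of_orders_eq_number_of_regions
    (n k : ℕ) (t : Fin k → ℝ) (x : Fin k → EuclideanSpace ℝ (Fin n))
    (hsep : ∀ i j : Fin k, i ≠ j → (t i - t j) ^ 2 < ‖x i - x j‖ ^ 2) :
    (∀ v ∈ goodRegion t x, ∀ w ∈ connectedComponentIn (goodRegion t x) v,
        ∀ i j : Fin k, (obsTime t x v i < obsTime t x v j ↔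
          obsTime t x w i < obsTime t x w j)) ∧
    Nat.card {π : Equiv.Perm (Fin k) // Achievable t x π}
      = Nat.card (ballComponents t x) ∧
    ∃ e : ballComponents t x ≃ {π : Equiv.Perm (Fin k) // Achievable t x π},
      ∀ C : ballComponents t x, ∀ v ∈ (C : Set (EuclideanSpace ℝ (Fin n))),
        StrictMono fun m : Fin k => obsTime t x v (((e C) : Equiv.Perm (Fin k)) m) := by
  refine ⟨order_const, ?_⟩
  -- construct the map from components to achievable orders
  have inj_of_good : ∀ v ∈ goodRegion t x, Function.Injective (obsTime t x v) := by
    intro v hv i j hij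
    by_contra h
    exact good_ne hv h hij
  -- the sorting permutation attached to a component
  have hmap : ∀ C : ballComponents t x, ∃ π : Equiv.Perm (Fin k),
      Achievable t x π ∧ ∀ v ∈ (C : Set (EuclideanSpace ℝ (Fin n))),
        StrictMono fun m : Fin k => obsTime t x v (π m) := by
    rintro ⟨C, hC⟩
    obtain ⟨v, hv1, hv2, rfl⟩ := hC
    obtain ⟨π, hπ⟩ := sort_exists (inj_of_good v hv2)
    have hall : ∀ w ∈ connectedComponentIn (goodRegion t x) v,
        StrictMono fun m : Fin k => obsTime t x w (π m) := by
      intro w hw a b hab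
      exact (order_const v hv2 w hw (π a) (π b)).1 (hπ hab)
    exact ⟨π, ⟨v, hv1, hall v (mem_connectedComponentIn hv2)⟩, hall⟩
  choose F hF1 hF2 using hmap
  have hFbij : Function.Bijective fun C : ballComponents t x =>
      (⟨F C, hF1 C⟩ : {π : Equiv.Perm (Fin k) // Achievable t x π}) := by
    constructor
    · -- injective
      rintro ⟨C₁, hC₁⟩ ⟨C₂, hC₂⟩ hFe
      simp only [Subtype.mk.injEq] at hFe
      obtain ⟨v₁, hn₁, hg₁, rfl⟩ := hC₁
      obtain ⟨v₂, hn₂, hg₂, rfl⟩ := hC₂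
      have hs₁ := hF2 ⟨_, ⟨v₁, hn₁, hg₁, rfl⟩⟩ v₁ (mem_connectedComponentIn hg₁)
      have hs₂ := hF2 ⟨_, ⟨v₂, hn₂, hg₂, rfl⟩⟩ v₂ (mem_connectedComponentIn hg₂)
      rw [hFe] at hs₁
      -- v₁ and v₂ induce the same order
      have horder : ∀ i j : Fin k,
          obsTime t x v₁ i < obsTime t x v₁ j ↔ obsTime t x v₂ i < obsTime t x v₂ j := by
        intro i j
        set σ := F ⟨_, ⟨v₂, hn₂, hg₂, rfl⟩⟩ with hσ
        have hi := σ.apply_symm_apply i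
        have hj := σ.apply_symm_apply j
        rw [← hi, ← hj, hs₁.lt_iff_lt, hs₂.lt_iff_lt]
      have := same_order_mem hg₁ hg₂ horder
      apply Subtype.ext
      exact connectedComponentIn_eq this
    · -- surjective
      rintro ⟨π, v, hv1, hv2⟩
      have hvg : v ∈ goodRegion t x := by
        intro i j hij heq
        have h1 : obsTime t x v i = obsTime t x v j := by
          have := obs_sub (t := t) (x := x) v i j
          rw [← heq] at this; linarith
        have h2 : obsTime t x v (π (π.symm i)) = obsTime t x v (π (π.symm j)) := by
          rwa [π.apply_symm_apply, π.apply_symm_apply]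
        have := hv2.injective h2
        exact hij (by simpa using congrArg π this)
      refine ⟨⟨connectedComponentIn (goodRegion t x) v, ⟨v, hv1, hvg, rfl⟩⟩, ?_⟩
      have hs := hF2 ⟨_, ⟨v, hv1, hvg, rfl⟩⟩ v (mem_connectedComponentIn hvg)
      have : F ⟨_, ⟨v, hv1, hvg, rfl⟩⟩ = π :=
        sort_unique (inj_of_good v hvg) hs hv2
      simp [this]
  refine ⟨(Nat.card_congr (Equiv.ofBijective _ hFbij)).symm, Equiv.ofBijective _ hFbij, ?_⟩
  intro C v hv
  exact hF2 C v hv
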